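/- The set of real numbers of the form ∫_{−π/3}^{π/3} (u'(x)² − u(x)² − 2u(x)) dx, where u : ℝ → ℝ ranges over continuously differentiable functions with u(−π/3) = u(π/3) = 0, has least element 2(π/3 − √3); moreover this least value is attained by u*(x) = 2cos x − 1. -/

import Mathlib

open Real MeasureTheory intervalIntegral

lemma key0 : (∫ x in (-(Real.pi/3))..(Real.pi/3), (1 - 4 * Real.cos (2*x)))
    = 2 * (Real.pi/3 - Real.sqrt 3) := by
  have h : ∀ x ∈ Set.uIcc (-(Real.pi/3)) (Real.pi/3),
      HasDerivAt (fun y => y - 2 * Real.sin (2*y)) (1 - 4 * Real.cos (2*x)) x := by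
    intro x _
    have h1 : HasDerivAt (fun y : ℝ => 2*y) 2 x := by
      simpa using (hasDerivAt_id x).const_mul 2
    have h2 : HasDerivAt (fun y => Real.sin (2*y)) (Real.cos (2*x) * 2) x :=
      (Real.hasDerivAt_sin (2*x)).comp x h1
    have := (hasDerivAt_id x).sub (h2.const_mul 2)
    refine this.congr_deriv ?_
    ring
  rw [intervalIntegral.integral_eq_sub_of_hasDerivAt h
    (by apply Continuous.intervalIntegrable; continuity)]
  have hs : Real.sin (2 * (Real.pi/3)) = Real.sqrt 3 / 2 := by
    have : 2 * (Real.pi/3) = Real.pi - Real.pi/3 := by ring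
    rw [this, Real.sin_pi_sub, Real.sin_pi_div_three]
  have hs2 : Real.sin (2 * (-(Real.pi/3))) = -(Real.sqrt 3 / 2) := by
    rw [show 2 * (-(Real.pi/3)) = -(2 * (Real.pi/3)) by ring, Real.sin_neg, hs]
  simp only [hs, hs2]
  ring

lemma derivstar (x : ℝ) : deriv (fun s => 2*Real.cos s - 1) x = -2 * Real.sin x := by
  have h : HasDerivAt (fun s => 2*Real.cos s - 1) (-2 * Real.sin x) x := by
    have := ((Real.hasDerivAt_cos x).const_mul 2).sub_const 1
    refine this.congr_deriv ?_; ring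
  exact h.deriv

lemma part2 : (∫ x in (-(Real.pi/3))..(Real.pi/3),
      ((deriv (fun s => 2*Real.cos s - 1) x)^2 - (2*Real.cos x - 1)^2 - 2*(2*Real.cos x - 1)))
    = 2 * (Real.pi/3 - Real.sqrt 3) := by
  rw [← key0]
  apply intervalIntegral.integral_congr
  intro x _
  simp only []
  rw [derivstar]
  have h := Real.sin_sq_add_cos_sq x
  have h2 : Real.cos (2*x) = 2 * Real.cos x ^ 2 - 1 := Real.cos_two_mul x
  nlinarith [h, h2]

lemma lower (u : ℝ → ℝ) (hu : ContDiff ℝ 1 u) (ha : u (-(Real.pi/3)) = 0)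
    (hb : u (Real.pi/3) = 0) :
    2 * (Real.pi/3 - Real.sqrt 3)
      ≤ ∫ x in (-(Real.pi/3))..(Real.pi/3), ((deriv u x)^2 - (u x)^2 - 2 * u x) := by
  have hpi := Real.pi_pos
  have hab : -(Real.pi/3) ≤ Real.pi/3 := by linarith
  have hcos : ∀ x ∈ Set.uIcc (-(Real.pi/3)) (Real.pi/3), Real.cos x ≠ 0 := by
    intro x hx
    rw [Set.uIcc_of_le hab] at hx
    have : 0 < Real.cos x := Real.cos_pos_of_mem_Ioo
      ⟨by cases hx; linarith, by cases hx; linarith⟩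
    linarith
  set v : ℝ → ℝ := fun x => u x - 2 * Real.cos x + 1 with hvdef
  have hv : ∀ x, HasDerivAt v (deriv u x + 2 * Real.sin x) x := by
    intro x
    have h1 := (hu.differentiable one_ne_zero x).hasDerivAt
    have h2 := ((Real.hasDerivAt_cos x).const_mul 2)
    have := (h1.sub h2).add_const 1
    refine this.congr_deriv ?_
    ring
  set q : ℝ → ℝ := fun x => deriv u x + 2 * Real.sin x + Real.tan x * v x with hqdef
  set G' : ℝ → ℝ := fun x =>
      -(((Real.tan x)^2 + 1) * v x ^ 2
        + Real.tan x * (2 * v x * (deriv u x + 2 * Real.sin x))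
        + 4 * (Real.cos x * v x)
        + 4 * (Real.sin x * (deriv u x + 2 * Real.sin x))) with hG'def
  set g : ℝ → ℝ := fun x => -(Real.tan x * v x ^ 2) - 4 * (Real.sin x * v x) with hgdef
  -- derivative of g
  have hg : ∀ x ∈ Set.uIcc (-(Real.pi/3)) (Real.pi/3), HasDerivAt g (G' x) x := by
    intro x hx
    have hc := hcos x hx
    have htan : HasDerivAt Real.tan (Real.tan x ^ 2 + 1) x := by
      have h := Real.hasDerivAt_tan hc
      have he : (1 : ℝ) / Real.cos x ^ 2 = Real.tan x ^ 2 + 1 := by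
        rw [Real.tan_eq_sin_div_cos]
        have hs := Real.sin_sq_add_cos_sq x
        field_simp
        linarith
      rwa [he] at h
    have h1 := (htan.mul ((hv x).pow 2)).neg
    have h2 := (((Real.hasDerivAt_sin x).mul (hv x)).const_mul 4)
    have := h1.sub h2
    refine this.congr_deriv ?_
    simp only [hG'def, Pi.pow_apply]
    norm_num
    ring
  -- continuity
  have hderivc : Continuous (deriv u) := hu.continuous_deriv le_rfl
  have hvc : Continuous v := by
    simp only [hvdef]; exact ((hu.continuous).sub (continuous_const.mul Real.continuous_cos)).add continuous_const
  have htanc : ContinuousOn Real.tan (Set.uIcc (-(Real.pi/3)) (Real.pi/3)) := fun x hx =>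
    (Real.continuousAt_tan.mpr (hcos x hx)).continuousWithinAt
  have hI1 : IntervalIntegrable (fun x => 1 - 4 * Real.cos (2*x)) volume
      (-(Real.pi/3)) (Real.pi/3) := by
    apply Continuous.intervalIntegrable; continuity
  have hI2 : IntervalIntegrable (fun x => q x ^ 2) volume (-(Real.pi/3)) (Real.pi/3) := by
    apply ContinuousOn.intervalIntegrable
    exact (((hderivc.add (continuous_const.mul Real.continuous_sin)).continuousOn).add
      (htanc.mul hvc.continuousOn)).pow 2
  have hI3 : IntervalIntegrable G' volume (-(Real.pi/3)) (Real.pi/3) := by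
    apply ContinuousOn.intervalIntegrable
    apply ContinuousOn.neg
    apply ContinuousOn.add
    apply ContinuousOn.add
    apply ContinuousOn.add
    · exact (((htanc.pow 2).add continuousOn_const).mul (hvc.continuousOn.pow 2))
    · exact htanc.mul ((continuousOn_const.mul hvc.continuousOn).mul
        ((hderivc.add (continuous_const.mul Real.continuous_sin)).continuousOn))
    · exact continuousOn_const.mul (Real.continuous_cos.continuousOn.mul hvc.continuousOn)
    · exact continuousOn_const.mul (Real.continuous_sin.continuousOn.mul
        ((hderivc.add (continuous_const.mul Real.continuous_sin)).continuousOn))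
  -- pointwise identity
  have hcongr : (∫ x in (-(Real.pi/3))..(Real.pi/3), ((deriv u x)^2 - (u x)^2 - 2 * u x))
      = ∫ x in (-(Real.pi/3))..(Real.pi/3), ((1 - 4 * Real.cos (2*x)) + q x ^ 2 + G' x) := by
    apply intervalIntegral.integral_congr
    intro x _
    have h2x : Real.cos (2*x) = Real.cos x ^ 2 - Real.sin x ^ 2 := by
      rw [two_mul, Real.cos_add]; ring
    simp only [hqdef, hG'def, hvdef, h2x]
    ring
  -- g vanishes at the endpoints
  have hva : v (-(Real.pi/3)) = 0 := by
    simp only [hvdef, Real.cos_neg, Real.cos_pi_div_three, ha]; ring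
  have hvb : v (Real.pi/3) = 0 := by
    simp only [hvdef, Real.cos_pi_div_three, hb]; ring
  have hgint : (∫ x in (-(Real.pi/3))..(Real.pi/3), G' x) = 0 := by
    rw [intervalIntegral.integral_eq_sub_of_hasDerivAt hg hI3]
    simp only [hgdef, hva, hvb]
    ring
  have hqnn : 0 ≤ ∫ x in (-(Real.pi/3))..(Real.pi/3), q x ^ 2 :=
    intervalIntegral.integral_nonneg hab (fun x _ => sq_nonneg _)
  rw [hcongr, intervalIntegral.integral_add (hI1.add hI2) hI3,
    intervalIntegral.integral_add hI1 hI2, key0, hgint]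
  linarith

theorem stmt_5 :
    IsLeast { r : ℝ | ∃ u : ℝ → ℝ, ContDiff ℝ 1 u ∧ u (-(Real.pi/3)) = 0 ∧ u (Real.pi/3) = 0 ∧
        r = ∫ x in (-(Real.pi/3))..(Real.pi/3), ((deriv u x)^2 - (u x)^2 - 2 * u x) }
      (2 * (Real.pi/3 - Real.sqrt 3))
    ∧ (∫ x in (-(Real.pi/3))..(Real.pi/3),
        ((deriv (fun s => 2*Real.cos s - 1) x)^2 - (2*Real.cos x - 1)^2 - 2*(2*Real.cos x - 1)))
      = 2 * (Real.pi/3 - Real.sqrt 3) := by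
  constructor
  · constructor
    · refine ⟨fun s => 2*Real.cos s - 1, ?_, ?_, ?_, ?_⟩
      · exact (contDiff_const.mul Real.contDiff_cos).sub contDiff_const
      · simp only [Real.cos_neg, Real.cos_pi_div_three]; ring
      · simp only [Real.cos_pi_div_three]; ring
      · exact part2.symm
    · rintro r ⟨u, hu, ha, hb, rfl⟩
      exact lower u hu ha hb
  · exact part2
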